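/- Adequacy for the simply-typed λ-calculus with sums in the μμ̃ machine: if Γ ⊢ t : A and σ maps each (x:B) ∈ Γ to a truth witness of B, then ⟦t⟧[σ] ∈ |A|, where |·| and ‖·‖ are defined with falsity values for arrows ‖A→B‖v = |A| × ‖B‖ and truth values for sums |A₁+A₂|v = { inj_i u | u ∈ |A_i| }, closed by (bi-)orthogonality with respect to a pole closed under anti-reduction. -/

import Mathlib

mutual
/-- μμ̃ machine terms. -/
inductive MTm where
  | var : Nat → MTm
  | mu : MMach → MTm            -- μα.m, binds co-variable 0
  | muPair : MMach → MTm        -- μ(x·α).m, binds variable 0 and co-variable 0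
  | injl : MTm → MTm
  | injr : MTm → MTm
/-- μμ̃ machine co-terms (contexts). -/
inductive MCo where
  | covar : Nat → MCo
  | cons : MTm → MCo → MCo      -- t·e
  | mutilde : MMach → MCo       -- μ̃x.m, binds variable 0
  | case : MMach → MMach → MCo  -- μ̃[inj₁x₁.m₁ | inj₂x₂.m₂], each branch binds variable 0
/-- μμ̃ machine configurations ⟨t | e⟩. -/
inductive MMach where
  | conf : MTm → MCo → MMach
end

/-- Lift a renaming under a binder. -/
def liftN (f : Nat → Nat) : Nat → Nat
  | 0 => 0
  | n + 1 => f n + 1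

mutual
/-- Simultaneous renaming of variables (ft) and co-variables (fc). -/
def MTm.rename (ft fc : Nat → Nat) : MTm → MTm
  | .var n => .var (ft n)
  | .mu m => .mu (MMach.rename ft (liftN fc) m)
  | .muPair m => .muPair (MMach.rename (liftN ft) (liftN fc) m)
  | .injl t => .injl (MTm.rename ft fc t)
  | .injr t => .injr (MTm.rename ft fc t)
def MCo.rename (ft fc : Nat → Nat) : MCo → MCo
  | .covar n => .covar (fc n)
  | .cons t e => .cons (MTm.rename ft fc t) (MCo.rename ft fc e)
  | .mutilde m => .mutilde (MMach.rename (liftN ft) fc m)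
  | .case m₁ m₂ => .case (MMach.rename (liftN ft) fc m₁) (MMach.rename (liftN ft) fc m₂)
def MMach.rename (ft fc : Nat → Nat) : MMach → MMach
  | .conf t e => .conf (MTm.rename ft fc t) (MCo.rename ft fc e)
end

/-- Lift a substitution under a variable binder. -/
def upT (σt : Nat → MTm) (σc : Nat → MCo) : (Nat → MTm) × (Nat → MCo) :=
  (fun n => match n with
    | 0 => .var 0
    | n + 1 => MTm.rename Nat.succ id (σt n),
   fun n => MCo.rename Nat.succ id (σc n))

/-- Lift a substitution under a co-variable binder. -/
def upC (σt : Nat → MTm) (σc : Nat → MCo) : (Nat → MTm) × (Nat → MCo) :=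
  (fun n => MTm.rename id Nat.succ (σt n),
   fun n => match n with
    | 0 => .covar 0
    | n + 1 => MCo.rename id Nat.succ (σc n))

mutual
/-- Simultaneous substitution of terms for variables and co-terms for co-variables. -/
def MTm.subst (σt : Nat → MTm) (σc : Nat → MCo) : MTm → MTm
  | .var n => σt n
  | .mu m => .mu (MMach.subst (upC σt σc).1 (upC σt σc).2 m)
  | .muPair m =>
      .muPair (MMach.subst (upT (upC σt σc).1 (upC σt σc).2).1
                           (upT (upC σt σc).1 (upC σt σc).2).2 m)
  | .injl t => .injl (MTm.subst σt σc t)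
  | .injr t => .injr (MTm.subst σt σc t)
def MCo.subst (σt : Nat → MTm) (σc : Nat → MCo) : MCo → MCo
  | .covar n => σc n
  | .cons t e => .cons (MTm.subst σt σc t) (MCo.subst σt σc e)
  | .mutilde m => .mutilde (MMach.subst (upT σt σc).1 (upT σt σc).2 m)
  | .case m₁ m₂ => .case (MMach.subst (upT σt σc).1 (upT σt σc).2 m₁)
                         (MMach.subst (upT σt σc).1 (upT σt σc).2 m₂)
def MMach.subst (σt : Nat → MTm) (σc : Nat → MCo) : MMach → MMach
  | .conf t e => .conf (MTm.subst σt σc t) (MCo.subst σt σc e)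
end

/-- m[e/α] : substitute co-term `e` for co-variable 0. -/
def MMach.substCo (m : MMach) (e : MCo) : MMach :=
  MMach.subst MTm.var (fun n => match n with | 0 => e | n + 1 => .covar n) m

/-- m[t/x] : substitute term `t` for variable 0. -/
def MMach.substTm (m : MMach) (t : MTm) : MMach :=
  MMach.subst (fun n => match n with | 0 => t | n + 1 => .var n) MCo.covar m

/-- m[t/x, e/α] : substitute both a term and a co-term. -/
def MMach.substTmCo (m : MMach) (t : MTm) (e : MCo) : MMach :=
  MMach.subst (fun n => match n with | 0 => t | n + 1 => .var n)
              (fun n => match n with | 0 => e | n + 1 => .covar n) m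

mutual
/-- Reduction of μμ̃ terms (congruence). -/
inductive StepT : MTm → MTm → Prop
  | mu {m m'} : StepM m m' → StepT (.mu m) (.mu m')
  | muPair {m m'} : StepM m m' → StepT (.muPair m) (.muPair m')
  | injl {t t'} : StepT t t' → StepT (.injl t) (.injl t')
  | injr {t t'} : StepT t t' → StepT (.injr t) (.injr t')
/-- Reduction of μμ̃ co-terms (congruence). -/
inductive StepC : MCo → MCo → Prop
  | consl {t t'} (e) : StepT t t' → StepC (.cons t e) (.cons t' e)
  | consr (t) {e e'} : StepC e e' → StepC (.cons t e) (.cons t e')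
  | mutilde {m m'} : StepM m m' → StepC (.mutilde m) (.mutilde m')
  | casel {m₁ m₁'} (m₂) : StepM m₁ m₁' → StepC (.case m₁ m₂) (.case m₁' m₂)
  | caser (m₁) {m₂ m₂'} : StepM m₂ m₂' → StepC (.case m₁ m₂) (.case m₁ m₂')
/-- Reduction of μμ̃ machine configurations. -/
inductive StepM : MMach → MMach → Prop
  | mu (m : MMach) (e : MCo) : StepM (.conf (.mu m) e) (m.substCo e)
  | mutilde (t : MTm) (m : MMach) : StepM (.conf t (.mutilde m)) (m.substTm t)
  | muPair (m : MMach) (u : MTm) (e : MCo) :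
      StepM (.conf (.muPair m) (.cons u e)) (m.substTmCo u e)
  | casel (t : MTm) (m₁ m₂ : MMach) :
      StepM (.conf (.injl t) (.case m₁ m₂)) (m₁.substTm t)
  | caser (t : MTm) (m₁ m₂ : MMach) :
      StepM (.conf (.injr t) (.case m₁ m₂)) (m₂.substTm t)
  | congT {t t'} (e) : StepT t t' → StepM (.conf t e) (.conf t' e)
  | congC (t) {e e'} : StepC e e' → StepM (.conf t e) (.conf t e')
end

/-- Source λ-calculus with sums (de Bruijn). In `case t u₁ u₂` each branch binds
variable 0. -/
inductive LTm where
  | var : Nat → LTm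
  | lam : LTm → LTm
  | app : LTm → LTm → LTm
  | injl : LTm → LTm
  | injr : LTm → LTm
  | case : LTm → LTm → LTm → LTm

/-- Compilation of λ-terms with sums into the μμ̃ machine (call-by-name). -/
def transl : LTm → MTm
  | .var n => .var n
  | .lam t => .muPair (.conf (transl t) (.covar 0))
  | .app t u => .mu (.conf (transl t) (.cons (transl u) (.covar 0)))
  | .injl t => .injl (transl t)
  | .injr t => .injr (transl t)
  | .case t u₁ u₂ =>
      .mu (.conf (transl t)
        (.case (.conf (transl u₁) (.covar 0)) (.conf (transl u₂) (.covar 0))))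

/-- Simple types: a (positive) base type, function types and sum types. -/
inductive Ty where
  | base : Ty
  | arrow : Ty → Ty → Ty
  | sum : Ty → Ty → Ty

/-- Typing judgment of the simply-typed λ-calculus with sums. -/
inductive HasTy : List Ty → LTm → Ty → Prop
  | var {Γ n A} : Γ[n]? = some A → HasTy Γ (.var n) A
  | lam {Γ t A B} : HasTy (A :: Γ) t B → HasTy Γ (.lam t) (.arrow A B)
  | app {Γ t u A B} : HasTy Γ t (.arrow A B) → HasTy Γ u A → HasTy Γ (.app t u) B
  | injl {Γ t A B} : HasTy Γ t A → HasTy Γ (.injl t) (.sum A B)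
  | injr {Γ t A B} : HasTy Γ t B → HasTy Γ (.injr t) (.sum A B)
  | case {Γ t u₁ u₂ A B C} : HasTy Γ t (.sum A B) → HasTy (A :: Γ) u₁ C →
      HasTy (B :: Γ) u₂ C → HasTy Γ (.case t u₁ u₂) C

/-- Orthogonal of a set of terms. -/
def orthC (pole : MMach → Prop) (S : Set MTm) : Set MCo :=
  {e | ∀ t ∈ S, pole (.conf t e)}

/-- Orthogonal of a set of co-terms. -/
def orthT (pole : MMach → Prop) (S : Set MCo) : Set MTm :=
  {t | ∀ e ∈ S, pole (.conf t e)}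

/-- Truth witnesses |A|, defined by recursion on types:
for arrows, |A→B| = (‖A→B‖v)⊥ with ‖A→B‖v = { u·e | u ∈ |A|, e ∈ ‖B‖ };
for sums, |A₁+A₂| = (|A₁+A₂|v)⊥⊥ with |A₁+A₂|v = { inj_i u | u ∈ |A_i| };
the base type is interpreted by the bi-orthogonal of a given set of values.
Throughout, ‖B‖ = |B|⊥. -/
def tru (pole : MMach → Prop) (baseTruv : Set MTm) : Ty → Set MTm
  | .base => orthT pole (orthC pole baseTruv)
  | .arrow A B =>
      orthT pole {c | ∃ u e, c = .cons u e ∧ u ∈ tru pole baseTruv A ∧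
        e ∈ orthC pole (tru pole baseTruv B)}
  | .sum A B =>
      orthT pole (orthC pole
        {t | (∃ u, t = .injl u ∧ u ∈ tru pole baseTruv A) ∨
             (∃ u, t = .injr u ∧ u ∈ tru pole baseTruv B)})

/-- Falsity witnesses: ‖A‖ = |A|⊥. -/
def fal (pole : MMach → Prop) (baseTruv : Set MTm) (A : Ty) : Set MCo :=
  orthC pole (tru pole baseTruv A)

theorem liftN_liftN (f g : Nat → Nat) :
    (fun n => liftN f (liftN g n)) = liftN (fun n => f (g n)) := by
  funext n; cases n <;> rfl

theorem renamet_congr (s : MTm) {f f' g g'} (h1 : f = f') (h2 : g = g') :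
    MTm.rename f g s = MTm.rename f' g' s := by rw [h1, h2]
theorem renamec_congr (s : MCo) {f f' g g'} (h1 : f = f') (h2 : g = g') :
    MCo.rename f g s = MCo.rename f' g' s := by rw [h1, h2]
theorem renamem_congr (s : MMach) {f f' g g'} (h1 : f = f') (h2 : g = g') :
    MMach.rename f g s = MMach.rename f' g' s := by rw [h1, h2]
theorem substt_congr (s : MTm) {f f' : Nat → MTm} {g g' : Nat → MCo}
    (h1 : f = f') (h2 : g = g') : MTm.subst f g s = MTm.subst f' g' s := by rw [h1, h2]
theorem substc_congr (s : MCo) {f f' : Nat → MTm} {g g' : Nat → MCo}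
    (h1 : f = f') (h2 : g = g') : MCo.subst f g s = MCo.subst f' g' s := by rw [h1, h2]
theorem substm_congr (s : MMach) {f f' : Nat → MTm} {g g' : Nat → MCo}
    (h1 : f = f') (h2 : g = g') : MMach.subst f g s = MMach.subst f' g' s := by rw [h1, h2]

mutual
theorem rename_rename_t (ft fc ft' fc' : Nat → Nat) (s : MTm) :
    MTm.rename ft fc (MTm.rename ft' fc' s) =
      MTm.rename (fun n => ft (ft' n)) (fun n => fc (fc' n)) s := by
  cases s with
  | var n => rfl
  | mu m =>
      show MTm.mu _ = MTm.mu _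
      rw [rename_rename_m]
      exact congrArg _ (renamem_congr m rfl (liftN_liftN fc fc'))
  | muPair m =>
      show MTm.muPair _ = MTm.muPair _
      rw [rename_rename_m]
      exact congrArg _ (renamem_congr m (liftN_liftN ft ft') (liftN_liftN fc fc'))
  | injl t => show MTm.injl _ = MTm.injl _; rw [rename_rename_t]
  | injr t => show MTm.injr _ = MTm.injr _; rw [rename_rename_t]

theorem rename_rename_c (ft fc ft' fc' : Nat → Nat) (s : MCo) :
    MCo.rename ft fc (MCo.rename ft' fc' s) =
      MCo.rename (fun n => ft (ft' n)) (fun n => fc (fc' n)) s := by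
  cases s with
  | covar n => rfl
  | cons t e =>
      show MCo.cons _ _ = MCo.cons _ _
      rw [rename_rename_t, rename_rename_c]
  | mutilde m =>
      show MCo.mutilde _ = MCo.mutilde _
      rw [rename_rename_m]
      exact congrArg _ (renamem_congr m (liftN_liftN ft ft') rfl)
  | case m₁ m₂ =>
      show MCo.case _ _ = MCo.case _ _
      rw [rename_rename_m, rename_rename_m]
      exact congrArg₂ _ (renamem_congr m₁ (liftN_liftN ft ft') rfl)
        (renamem_congr m₂ (liftN_liftN ft ft') rfl)

theorem rename_rename_m (ft fc ft' fc' : Nat → Nat) (s : MMach) :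
    MMach.rename ft fc (MMach.rename ft' fc' s) =
      MMach.rename (fun n => ft (ft' n)) (fun n => fc (fc' n)) s := by
  cases s with
  | conf t e =>
      show MMach.conf _ _ = MMach.conf _ _
      rw [rename_rename_t, rename_rename_c]
end

mutual
theorem subst_rename_t (σt : Nat → MTm) (σc : Nat → MCo) (ft fc : Nat → Nat) (s : MTm) :
    MTm.subst σt σc (MTm.rename ft fc s) =
      MTm.subst (fun n => σt (ft n)) (fun n => σc (fc n)) s := by
  cases s with
  | var n => rfl
  | mu m =>
      show MTm.mu _ = MTm.mu _
      rw [subst_rename_m]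
      exact congrArg _ (substm_congr m rfl (by funext n; cases n <;> rfl))
  | muPair m =>
      show MTm.muPair _ = MTm.muPair _
      rw [subst_rename_m]
      exact congrArg _ (substm_congr m (by funext n; cases n <;> rfl)
        (by funext n; cases n <;> rfl))
  | injl t => show MTm.injl _ = MTm.injl _; rw [subst_rename_t]
  | injr t => show MTm.injr _ = MTm.injr _; rw [subst_rename_t]

theorem subst_rename_c (σt : Nat → MTm) (σc : Nat → MCo) (ft fc : Nat → Nat) (s : MCo) :
    MCo.subst σt σc (MCo.rename ft fc s) =
      MCo.subst (fun n => σt (ft n)) (fun n => σc (fc n)) s := by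
  cases s with
  | covar n => rfl
  | cons t e =>
      show MCo.cons _ _ = MCo.cons _ _
      rw [subst_rename_t, subst_rename_c]
  | mutilde m =>
      show MCo.mutilde _ = MCo.mutilde _
      rw [subst_rename_m]
      exact congrArg _ (substm_congr m (by funext n; cases n <;> rfl) rfl)
  | case m₁ m₂ =>
      show MCo.case _ _ = MCo.case _ _
      rw [subst_rename_m, subst_rename_m]
      exact congrArg₂ _ (substm_congr m₁ (by funext n; cases n <;> rfl) rfl)
        (substm_congr m₂ (by funext n; cases n <;> rfl) rfl)

theorem subst_rename_m (σt : Nat → MTm) (σc : Nat → MCo) (ft fc : Nat → Nat) (s : MMach) :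
    MMach.subst σt σc (MMach.rename ft fc s) =
      MMach.subst (fun n => σt (ft n)) (fun n => σc (fc n)) s := by
  cases s with
  | conf t e =>
      show MMach.conf _ _ = MMach.conf _ _
      rw [subst_rename_t, subst_rename_c]
end
mutual
theorem rename_subst_t (ft fc : Nat → Nat) (σt : Nat → MTm) (σc : Nat → MCo) (s : MTm) :
    MTm.rename ft fc (MTm.subst σt σc s) =
      MTm.subst (fun n => MTm.rename ft fc (σt n)) (fun n => MCo.rename ft fc (σc n)) s := by
  cases s with
  | var n => rfl
  | mu m =>
      show MTm.mu _ = MTm.mu _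
      rw [rename_subst_m]
      refine congrArg _ (substm_congr m ?_ ?_)
      · funext n
        show MTm.rename ft (liftN fc) (MTm.rename id Nat.succ (σt n)) = _
        rw [rename_rename_t]
        show _ = MTm.rename id Nat.succ (MTm.rename ft fc (σt n))
        rw [rename_rename_t]
        exact renamet_congr _ rfl (by funext k; rfl)
      · funext n
        cases n with
        | zero => rfl
        | succ n =>
            show MCo.rename ft (liftN fc) (MCo.rename id Nat.succ (σc n)) = _
            rw [rename_rename_c]
            show _ = MCo.rename id Nat.succ (MCo.rename ft fc (σc n))
            rw [rename_rename_c]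
            exact renamec_congr _ rfl (by funext k; rfl)
  | muPair m =>
      show MTm.muPair _ = MTm.muPair _
      rw [rename_subst_m]
      refine congrArg _ (substm_congr m ?_ ?_)
      · funext n
        cases n with
        | zero => rfl
        | succ n =>
            show MTm.rename (liftN ft) (liftN fc)
              (MTm.rename Nat.succ id (MTm.rename id Nat.succ (σt n))) = _
            rw [rename_rename_t, rename_rename_t]
            show _ = MTm.rename Nat.succ id
              (MTm.rename id Nat.succ (MTm.rename ft fc (σt n)))
            rw [rename_rename_t, rename_rename_t]
            exact renamet_congr _ (by funext k; rfl) (by funext k; rfl)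
      · funext n
        cases n with
        | zero => rfl
        | succ n =>
        show MCo.rename (liftN ft) (liftN fc) (MCo.rename Nat.succ id
          (MCo.rename id Nat.succ (σc n))) = _
        rw [rename_rename_c, rename_rename_c]
        show _ = MCo.rename Nat.succ id (MCo.rename id Nat.succ (MCo.rename ft fc (σc n)))
        rw [rename_rename_c, rename_rename_c]
        exact renamec_congr _ (by funext k; rfl) (by funext k; rfl)
  | injl t => show MTm.injl _ = MTm.injl _; rw [rename_subst_t]
  | injr t => show MTm.injr _ = MTm.injr _; rw [rename_subst_t]

theorem rename_subst_c (ft fc : Nat → Nat) (σt : Nat → MTm) (σc : Nat → MCo) (s : MCo) :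
    MCo.rename ft fc (MCo.subst σt σc s) =
      MCo.subst (fun n => MTm.rename ft fc (σt n)) (fun n => MCo.rename ft fc (σc n)) s := by
  cases s with
  | covar n => rfl
  | cons t e =>
      show MCo.cons _ _ = MCo.cons _ _
      rw [rename_subst_t, rename_subst_c]
  | mutilde m =>
      show MCo.mutilde _ = MCo.mutilde _
      rw [rename_subst_m]
      exact congrArg _ (substm_congr m (upT_fst_ren ft fc σt σc) (upT_snd_ren ft fc σt σc))
  | case m₁ m₂ =>
      show MCo.case _ _ = MCo.case _ _
      rw [rename_subst_m, rename_subst_m]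
      exact congrArg₂ _
        (substm_congr m₁ (upT_fst_ren ft fc σt σc) (upT_snd_ren ft fc σt σc))
        (substm_congr m₂ (upT_fst_ren ft fc σt σc) (upT_snd_ren ft fc σt σc))

theorem upT_fst_ren (ft fc : Nat → Nat) (σt : Nat → MTm) (σc : Nat → MCo) :
    (fun n => MTm.rename (liftN ft) fc ((upT σt σc).1 n)) =
      (upT (fun n => MTm.rename ft fc (σt n)) (fun n => MCo.rename ft fc (σc n))).1 := by
  funext n
  cases n with
  | zero => rfl
  | succ n =>
      show MTm.rename (liftN ft) fc (MTm.rename Nat.succ id (σt n)) = _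
      rw [rename_rename_t]
      show _ = MTm.rename Nat.succ id (MTm.rename ft fc (σt n))
      rw [rename_rename_t]
      exact renamet_congr _ (by funext k; rfl) rfl

theorem upT_snd_ren (ft fc : Nat → Nat) (σt : Nat → MTm) (σc : Nat → MCo) :
    (fun n => MCo.rename (liftN ft) fc ((upT σt σc).2 n)) =
      (upT (fun n => MTm.rename ft fc (σt n)) (fun n => MCo.rename ft fc (σc n))).2 := by
  funext n
  show MCo.rename (liftN ft) fc (MCo.rename Nat.succ id (σc n)) = _
  rw [rename_rename_c]
  show _ = MCo.rename Nat.succ id (MCo.rename ft fc (σc n))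
  rw [rename_rename_c]
  exact renamec_congr _ (by funext k; rfl) rfl

theorem rename_subst_m (ft fc : Nat → Nat) (σt : Nat → MTm) (σc : Nat → MCo) (s : MMach) :
    MMach.rename ft fc (MMach.subst σt σc s) =
      MMach.subst (fun n => MTm.rename ft fc (σt n)) (fun n => MCo.rename ft fc (σc n)) s := by
  cases s with
  | conf t e =>
      show MMach.conf _ _ = MMach.conf _ _
      rw [rename_subst_t, rename_subst_c]
end
theorem upC_fst_subst (σt τt : Nat → MTm) (σc τc : Nat → MCo) :
    (fun n => MTm.subst (upC σt σc).1 (upC σt σc).2 ((upC τt τc).1 n)) =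
      (upC (fun n => MTm.subst σt σc (τt n)) (fun n => MCo.subst σt σc (τc n))).1 := by
  funext n
  show MTm.subst (upC σt σc).1 (upC σt σc).2 (MTm.rename id Nat.succ (τt n)) = _
  rw [subst_rename_t]
  show _ = MTm.rename id Nat.succ (MTm.subst σt σc (τt n))
  rw [rename_subst_t]
  exact substt_congr _ rfl (by funext k; rfl)

theorem upC_snd_subst (σt τt : Nat → MTm) (σc τc : Nat → MCo) :
    (fun n => MCo.subst (upC σt σc).1 (upC σt σc).2 ((upC τt τc).2 n)) =
      (upC (fun n => MTm.subst σt σc (τt n)) (fun n => MCo.subst σt σc (τc n))).2 := by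
  funext n
  cases n with
  | zero => rfl
  | succ n =>
      show MCo.subst (upC σt σc).1 (upC σt σc).2 (MCo.rename id Nat.succ (τc n)) = _
      rw [subst_rename_c]
      show _ = MCo.rename id Nat.succ (MCo.subst σt σc (τc n))
      rw [rename_subst_c]
      exact substc_congr _ rfl (by funext k; rfl)

theorem upT_fst_subst (σt τt : Nat → MTm) (σc τc : Nat → MCo) :
    (fun n => MTm.subst (upT σt σc).1 (upT σt σc).2 ((upT τt τc).1 n)) =
      (upT (fun n => MTm.subst σt σc (τt n)) (fun n => MCo.subst σt σc (τc n))).1 := by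
  funext n
  cases n with
  | zero => rfl
  | succ n =>
      show MTm.subst (upT σt σc).1 (upT σt σc).2 (MTm.rename Nat.succ id (τt n)) = _
      rw [subst_rename_t]
      show _ = MTm.rename Nat.succ id (MTm.subst σt σc (τt n))
      rw [rename_subst_t]
      exact substt_congr _ (by funext k; rfl) rfl

theorem upT_snd_subst (σt τt : Nat → MTm) (σc τc : Nat → MCo) :
    (fun n => MCo.subst (upT σt σc).1 (upT σt σc).2 ((upT τt τc).2 n)) =
      (upT (fun n => MTm.subst σt σc (τt n)) (fun n => MCo.subst σt σc (τc n))).2 := by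
  funext n
  show MCo.subst (upT σt σc).1 (upT σt σc).2 (MCo.rename Nat.succ id (τc n)) = _
  rw [subst_rename_c]
  show _ = MCo.rename Nat.succ id (MCo.subst σt σc (τc n))
  rw [rename_subst_c]
  exact substc_congr _ (by funext k; rfl) rfl

mutual
theorem subst_subst_t (σt τt : Nat → MTm) (σc τc : Nat → MCo) (s : MTm) :
    MTm.subst σt σc (MTm.subst τt τc s) =
      MTm.subst (fun n => MTm.subst σt σc (τt n)) (fun n => MCo.subst σt σc (τc n)) s := by
  cases s with
  | var n => rfl
  | mu m =>
      show MTm.mu _ = MTm.mu _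
      rw [subst_subst_m]
      exact congrArg _ (substm_congr m (upC_fst_subst σt τt σc τc) (upC_snd_subst σt τt σc τc))
  | muPair m =>
      show MTm.muPair _ = MTm.muPair _
      rw [subst_subst_m]
      refine congrArg _ (substm_congr m ?_ ?_)
      · funext n
        cases n with
        | zero => rfl
        | succ n =>
            show MTm.subst (upT (upC σt σc).1 (upC σt σc).2).1
                (upT (upC σt σc).1 (upC σt σc).2).2
                (MTm.rename Nat.succ id (MTm.rename id Nat.succ (τt n))) = _
            rw [rename_rename_t, subst_rename_t]
            show _ = MTm.rename Nat.succ id (MTm.rename id Nat.succ (MTm.subst σt σc (τt n)))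
            rw [rename_rename_t, rename_subst_t]
            refine substt_congr _ ?_ ?_
            · funext k
              show MTm.rename Nat.succ id (MTm.rename id Nat.succ (σt k)) = _
              rw [rename_rename_t]
            · funext k
              show MCo.rename Nat.succ id (MCo.rename id Nat.succ (σc k)) = _
              rw [rename_rename_c]
      · funext n
        cases n with
        | zero => rfl
        | succ n =>
            show MCo.subst (upT (upC σt σc).1 (upC σt σc).2).1
                (upT (upC σt σc).1 (upC σt σc).2).2
                (MCo.rename Nat.succ id (MCo.rename id Nat.succ (τc n))) = _
            rw [rename_rename_c, subst_rename_c]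
            show _ = MCo.rename Nat.succ id (MCo.rename id Nat.succ (MCo.subst σt σc (τc n)))
            rw [rename_rename_c, rename_subst_c]
            refine substc_congr _ ?_ ?_
            · funext k
              show MTm.rename Nat.succ id (MTm.rename id Nat.succ (σt k)) = _
              rw [rename_rename_t]
            · funext k
              show MCo.rename Nat.succ id (MCo.rename id Nat.succ (σc k)) = _
              rw [rename_rename_c]
  | injl t => show MTm.injl _ = MTm.injl _; rw [subst_subst_t]
  | injr t => show MTm.injr _ = MTm.injr _; rw [subst_subst_t]

theorem subst_subst_c (σt τt : Nat → MTm) (σc τc : Nat → MCo) (s : MCo) :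
    MCo.subst σt σc (MCo.subst τt τc s) =
      MCo.subst (fun n => MTm.subst σt σc (τt n)) (fun n => MCo.subst σt σc (τc n)) s := by
  cases s with
  | covar n => rfl
  | cons t e =>
      show MCo.cons _ _ = MCo.cons _ _
      rw [subst_subst_t, subst_subst_c]
  | mutilde m =>
      show MCo.mutilde _ = MCo.mutilde _
      rw [subst_subst_m]
      exact congrArg _ (substm_congr m (upT_fst_subst σt τt σc τc) (upT_snd_subst σt τt σc τc))
  | case m₁ m₂ =>
      show MCo.case _ _ = MCo.case _ _
      rw [subst_subst_m, subst_subst_m]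
      exact congrArg₂ _
        (substm_congr m₁ (upT_fst_subst σt τt σc τc) (upT_snd_subst σt τt σc τc))
        (substm_congr m₂ (upT_fst_subst σt τt σc τc) (upT_snd_subst σt τt σc τc))

theorem subst_subst_m (σt τt : Nat → MTm) (σc τc : Nat → MCo) (s : MMach) :
    MMach.subst σt σc (MMach.subst τt τc s) =
      MMach.subst (fun n => MTm.subst σt σc (τt n)) (fun n => MCo.subst σt σc (τc n)) s := by
  cases s with
  | conf t e =>
      show MMach.conf _ _ = MMach.conf _ _
      rw [subst_subst_t, subst_subst_c]
end

mutual
theorem subst_id_t (s : MTm) : MTm.subst MTm.var MCo.covar s = s := by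
  cases s with
  | var n => rfl
  | mu m =>
      show MTm.mu _ = MTm.mu _
      rw [substm_congr m (show (upC MTm.var MCo.covar).1 = MTm.var from rfl)
        (show (upC MTm.var MCo.covar).2 = MCo.covar by funext n; cases n <;> rfl)]
      rw [subst_id_m]
  | muPair m =>
      show MTm.muPair _ = MTm.muPair _
      rw [substm_congr m
        (show (upT (upC MTm.var MCo.covar).1 (upC MTm.var MCo.covar).2).1 = MTm.var by
          funext n; cases n <;> rfl)
        (show (upT (upC MTm.var MCo.covar).1 (upC MTm.var MCo.covar).2).2 = MCo.covar by
          funext n; cases n <;> rfl)]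
      rw [subst_id_m]
  | injl t => show MTm.injl _ = MTm.injl _; rw [subst_id_t]
  | injr t => show MTm.injr _ = MTm.injr _; rw [subst_id_t]

theorem subst_id_c (s : MCo) : MCo.subst MTm.var MCo.covar s = s := by
  cases s with
  | covar n => rfl
  | cons t e =>
      show MCo.cons _ _ = MCo.cons _ _
      rw [subst_id_t, subst_id_c]
  | mutilde m =>
      show MCo.mutilde _ = MCo.mutilde _
      rw [substm_congr m (show (upT MTm.var MCo.covar).1 = MTm.var by funext n; cases n <;> rfl)
        (show (upT MTm.var MCo.covar).2 = MCo.covar by funext n; rfl)]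
      rw [subst_id_m]
  | case m₁ m₂ =>
      show MCo.case _ _ = MCo.case _ _
      rw [substm_congr m₁ (show (upT MTm.var MCo.covar).1 = MTm.var by funext n; cases n <;> rfl)
        (show (upT MTm.var MCo.covar).2 = MCo.covar by funext n; rfl)]
      rw [substm_congr m₂ (show (upT MTm.var MCo.covar).1 = MTm.var by funext n; cases n <;> rfl)
        (show (upT MTm.var MCo.covar).2 = MCo.covar by funext n; rfl)]
      rw [subst_id_m, subst_id_m]

theorem subst_id_m (s : MMach) : MMach.subst MTm.var MCo.covar s = s := by
  cases s with
  | conf t e =>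
      show MMach.conf _ _ = MMach.conf _ _
      rw [subst_id_t, subst_id_c]
end
/-- Extend a term substitution. -/
def extT (u : MTm) (σ : Nat → MTm) : Nat → MTm :=
  fun n => match n with | 0 => u | n + 1 => σ n

/-- Extend a co-term substitution. -/
def extC (e : MCo) (σ : Nat → MCo) : Nat → MCo :=
  fun n => match n with | 0 => e | n + 1 => σ n

theorem key1 (σt : Nat → MTm) (σc : Nat → MCo) (m : MMach) (e : MCo) :
    (MMach.subst (upC σt σc).1 (upC σt σc).2 m).substCo e =
      MMach.subst σt (extC e σc) m := by
  unfold MMach.substCo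
  rw [subst_subst_m]
  refine substm_congr m ?_ ?_
  · funext n
    show MTm.subst _ _ (MTm.rename id Nat.succ (σt n)) = σt n
    rw [subst_rename_t]
    exact subst_id_t (σt n)
  · funext n
    cases n with
    | zero => rfl
    | succ n =>
        show MCo.subst _ _ (MCo.rename id Nat.succ (σc n)) = extC e σc (n + 1)
        rw [subst_rename_c]
        exact subst_id_c (σc n)

theorem key2 (σt : Nat → MTm) (σc : Nat → MCo) (m : MMach) (u : MTm) :
    (MMach.subst (upT σt σc).1 (upT σt σc).2 m).substTm u =
      MMach.subst (extT u σt) σc m := by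
  unfold MMach.substTm
  rw [subst_subst_m]
  refine substm_congr m ?_ ?_
  · funext n
    cases n with
    | zero => rfl
    | succ n =>
        show MTm.subst _ _ (MTm.rename Nat.succ id (σt n)) = extT u σt (n + 1)
        rw [subst_rename_t]
        exact subst_id_t (σt n)
  · funext n
    show MCo.subst _ _ (MCo.rename Nat.succ id (σc n)) = σc n
    rw [subst_rename_c]
    exact subst_id_c (σc n)

theorem key3 (σt : Nat → MTm) (σc : Nat → MCo) (m : MMach) (u : MTm) (e : MCo) :
    (MMach.subst (upT (upC σt σc).1 (upC σt σc).2).1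
        (upT (upC σt σc).1 (upC σt σc).2).2 m).substTmCo u e =
      MMach.subst (extT u σt) (extC e σc) m := by
  unfold MMach.substTmCo
  rw [subst_subst_m]
  refine substm_congr m ?_ ?_
  · funext n
    cases n with
    | zero => rfl
    | succ n =>
        show MTm.subst _ _
          (MTm.rename Nat.succ id (MTm.rename id Nat.succ (σt n))) = extT u σt (n + 1)
        rw [rename_rename_t, subst_rename_t]
        exact subst_id_t (σt n)
  · funext n
    cases n with
    | zero => rfl
    | succ n =>
        show MCo.subst _ _
          (MCo.rename Nat.succ id (MCo.rename id Nat.succ (σc n))) = extC e σc (n + 1)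
        rw [rename_rename_c, subst_rename_c]
        exact subst_id_c (σc n)

/-- The co-term part of a substitution is irrelevant on translated λ-terms. -/
theorem transl_subst (t : LTm) (σt : Nat → MTm) (σc σc' : Nat → MCo) :
    MTm.subst σt σc (transl t) = MTm.subst σt σc' (transl t) := by
  induction t generalizing σt σc σc' with
  | var n => rfl
  | lam t ih =>
      exact congrArg MTm.muPair (congrArg₂ MMach.conf
        (ih (upT (upC σt σc).1 (upC σt σc).2).1 (upT (upC σt σc).1 (upC σt σc).2).2
          (upT (upC σt σc').1 (upC σt σc').2).2) rfl)
  | app t u iht ihu =>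
      exact congrArg MTm.mu (congrArg₂ MMach.conf
        (iht (upC σt σc).1 (upC σt σc).2 (upC σt σc').2)
        (congrArg₂ MCo.cons (ihu (upC σt σc).1 (upC σt σc).2 (upC σt σc').2) rfl))
  | injl t ih => exact congrArg MTm.injl (ih σt σc σc')
  | injr t ih => exact congrArg MTm.injr (ih σt σc σc')
  | case t u₁ u₂ iht ih1 ih2 =>
      exact congrArg MTm.mu (congrArg₂ MMach.conf
        (iht (upC σt σc).1 (upC σt σc).2 (upC σt σc').2)
        (congrArg₂ MCo.case
          (congrArg₂ MMach.conf
            (ih1 (upT (upC σt σc).1 (upC σt σc).2).1 (upT (upC σt σc).1 (upC σt σc).2).2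
              (upT (upC σt σc').1 (upC σt σc').2).2) rfl)
          (congrArg₂ MMach.conf
            (ih2 (upT (upC σt σc).1 (upC σt σc).2).1 (upT (upC σt σc).1 (upC σt σc).2).2
              (upT (upC σt σc').1 (upC σt σc').2).2) rfl)))

/-- The defining falsity-value set of each truth value. -/
def truS (pole : MMach → Prop) (baseTruv : Set MTm) : Ty → Set MCo
  | .base => orthC pole baseTruv
  | .arrow A B => {c | ∃ u e, c = .cons u e ∧ u ∈ tru pole baseTruv A ∧
      e ∈ orthC pole (tru pole baseTruv B)}
  | .sum A B => orthC pole
      {t | (∃ u, t = .injl u ∧ u ∈ tru pole baseTruv A) ∨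
           (∃ u, t = .injr u ∧ u ∈ tru pole baseTruv B)}

theorem tru_eq (pole : MMach → Prop) (baseTruv : Set MTm) (A : Ty) :
    tru pole baseTruv A = orthT pole (truS pole baseTruv A) := by
  cases A <;> rfl

theorem mem_fal_of_truS (pole : MMach → Prop) (baseTruv : Set MTm) (A : Ty)
    {e : MCo} (he : e ∈ truS pole baseTruv A) : e ∈ orthC pole (tru pole baseTruv A) := by
  intro t ht
  rw [tru_eq] at ht
  exact ht e he
theorem hσ_ext {pole : MMach → Prop} {baseTruv : Set MTm} {Γ : List Ty} {A : Ty}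
    {σ : Nat → MTm} {u : MTm}
    (hσ : ∀ n B, Γ[n]? = some B → σ n ∈ tru pole baseTruv B)
    (hu : u ∈ tru pole baseTruv A) :
    ∀ n B, (A :: Γ)[n]? = some B → extT u σ n ∈ tru pole baseTruv B := by
  intro n B h
  cases n with
  | zero => cases h; exact hu
  | succ n => exact hσ n B h

/-- Adequacy for the simply-typed λ-calculus with sums in the μμ̃ machine:
if Γ ⊢ t : A and σ maps each (x:B) ∈ Γ to a truth witness of B, then
⟦t⟧[σ] ∈ |A|, for any pole closed under anti-reduction. -/
theorem adequacy (pole : MMach → Prop)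
    (hpole : ∀ m m', StepM m m' → pole m' → pole m)
    (baseTruv : Set MTm)
    {Γ : List Ty} {t : LTm} {A : Ty} (ht : HasTy Γ t A)
    (σ : Nat → MTm) (hσ : ∀ n B, Γ[n]? = some B → σ n ∈ tru pole baseTruv B) :
    MTm.subst σ MCo.covar (transl t) ∈ tru pole baseTruv A := by
    induction ht generalizing σ with
  | @var Γ n A h => exact hσ _ _ h
  | @lam Γ t A B ht ih =>
      rw [tru_eq]
      intro c hc
      obtain ⟨u, e, rfl, hu, he⟩ := hc
      refine hpole _ _ (StepM.muPair _ u e) ?_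
      rw [key3]
      show pole (.conf (MTm.subst (extT u σ) (extC e MCo.covar) (transl t)) e)
      rw [transl_subst t _ _ MCo.covar]
      exact he _ (ih (extT u σ) (hσ_ext hσ hu))
  | @app Γ t u A B ht hu iht ihu =>
      rw [tru_eq]
      intro e he
      refine hpole _ _ (StepM.mu _ _) ?_
      rw [key1]
      show pole (.conf (MTm.subst σ (extC e MCo.covar) (transl t))
        (.cons (MTm.subst σ (extC e MCo.covar) (transl u)) e))
      rw [transl_subst t _ _ MCo.covar, transl_subst u _ _ MCo.covar]
      have hT := iht σ hσ
      rw [tru_eq] at hT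
      exact hT _ ⟨_, e, rfl, ihu σ hσ, mem_fal_of_truS pole baseTruv B he⟩
  | @injl Γ t A B ht ih =>
      rw [tru_eq]
      intro e he
      exact he _ (Or.inl ⟨_, rfl, ih σ hσ⟩)
  | @injr Γ t A B ht ih =>
      rw [tru_eq]
      intro e he
      exact he _ (Or.inr ⟨_, rfl, ih σ hσ⟩)
  | @case Γ t u₁ u₂ A B C ht h1 h2 iht ih1 ih2 =>
      rw [tru_eq]
      intro e he
      refine hpole _ _ (StepM.mu _ _) ?_
      rw [key1]
      show pole (.conf (MTm.subst σ (extC e MCo.covar) (transl t))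
        (.case (MMach.subst (upT σ (extC e MCo.covar)).1 (upT σ (extC e MCo.covar)).2
            (.conf (transl u₁) (.covar 0)))
          (MMach.subst (upT σ (extC e MCo.covar)).1 (upT σ (extC e MCo.covar)).2
            (.conf (transl u₂) (.covar 0)))))
      rw [transl_subst t _ _ MCo.covar]
      have hT := iht σ hσ
      rw [tru_eq] at hT
      refine hT _ ?_
      intro v hv
      rcases hv with ⟨w, rfl, hw⟩ | ⟨w, rfl, hw⟩
      · refine hpole _ _ (StepM.casel w _ _) ?_
        rw [key2]
        show pole (.conf (MTm.subst (extT w σ) (extC e MCo.covar) (transl u₁)) e)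
        rw [transl_subst u₁ _ _ MCo.covar]
        have hx := ih1 (extT w σ) (hσ_ext hσ hw)
        rw [tru_eq] at hx
        exact hx e he
      · refine hpole _ _ (StepM.caser w _ _) ?_
        rw [key2]
        show pole (.conf (MTm.subst (extT w σ) (extC e MCo.covar) (transl u₂)) e)
        rw [transl_subst u₂ _ _ MCo.covar]
        have hx := ih2 (extT w σ) (hσ_ext hσ hw)
        rw [tru_eq] at hx
        exact hx e he
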